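/- For every real T > -1/3, setting s := √((T+1)/(3T+1)), the complex identity i·(s+i)² + T·(s+i)³ = -2(2T+1)²·√(T+1)/(3T+1)^{3/2} holds; in particular the left-hand side is a nonpositive real number equal to -F(T)/T² when T ≠ 0. -/

import Mathlib

/-- `F(T) = 2T²(2T+1)²√(T+1)/(3T+1)^{3/2}`. -/
noncomputable def Ffun (T : ℝ) : ℝ :=
  2 * T ^ 2 * (2 * T + 1) ^ 2 * Real.sqrt (T + 1) / (3 * T + 1) ^ ((3 : ℝ) / 2)

/-- With `s = √((T+1)/(3T+1))`, `i(s+i)² + T(s+i)³ = -2(2T+1)²√(T+1)/(3T+1)^{3/2}`,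
a nonpositive real number, equal to `-F(T)/T²` when `T ≠ 0`. -/
theorem steepest_descent_cubic_identity (T : ℝ) (hT : -(1 : ℝ) / 3 < T)
    (s : ℂ) (hs : s = ((Real.sqrt ((T + 1) / (3 * T + 1)) : ℝ) : ℂ)) :
    Complex.I * (s + Complex.I) ^ 2 + (T : ℂ) * (s + Complex.I) ^ 3 =
      ((-(2 * (2 * T + 1) ^ 2 * Real.sqrt (T + 1) / (3 * T + 1) ^ ((3 : ℝ) / 2)) : ℝ) : ℂ) ∧
    (-(2 * (2 * T + 1) ^ 2 * Real.sqrt (T + 1) / (3 * T + 1) ^ ((3 : ℝ) / 2)) : ℝ) ≤ 0 ∧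
    (T ≠ 0 →
      Complex.I * (s + Complex.I) ^ 2 + (T : ℂ) * (s + Complex.I) ^ 3 =
        ((-Ffun T / T ^ 2 : ℝ) : ℂ)) := by
  have h3 : (0 : ℝ) < 3 * T + 1 := by linarith
  have h1 : (0 : ℝ) < T + 1 := by linarith
  set a : ℝ := Real.sqrt ((T + 1) / (3 * T + 1)) with ha
  have ha2 : a ^ 2 = (T + 1) / (3 * T + 1) := Real.sq_sqrt (by positivity)
  have hadiv : a = Real.sqrt (T + 1) / Real.sqrt (3 * T + 1) :=
    Real.sqrt_div h1.le _
  have hsq3 : Real.sqrt (3 * T + 1) > 0 := Real.sqrt_pos.mpr h3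
  have hsq3sq : Real.sqrt (3 * T + 1) ^ 2 = 3 * T + 1 := Real.sq_sqrt h3.le
  have hrpow : (3 * T + 1) ^ ((3 : ℝ) / 2) = (3 * T + 1) * Real.sqrt (3 * T + 1) := by
    rw [show (3:ℝ)/2 = 1 + 1/2 by norm_num, Real.rpow_add h3, Real.rpow_one,
      Real.sqrt_eq_rpow]
  -- the real value
  have hreal : -(2 * (2 * T + 1) ^ 2 * Real.sqrt (T + 1) / (3 * T + 1) ^ ((3 : ℝ) / 2))
      = -2 * a * (2 * T + 1) ^ 2 / (3 * T + 1) := by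
    rw [hrpow, hadiv]
    field_simp
  have h3cne : ((3 * T + 1 : ℝ) : ℂ) ≠ 0 := by exact_mod_cast h3.ne'
  have ha2C : ((a : ℝ) : ℂ) ^ 2 * ((3 * T + 1 : ℝ) : ℂ) = ((T + 1 : ℝ) : ℂ) := by
    have : a ^ 2 * (3 * T + 1) = T + 1 := by rw [ha2]; exact div_mul_cancel₀ _ h3.ne'
    exact_mod_cast this
  have hmain : Complex.I * (s + Complex.I) ^ 2 + (T : ℂ) * (s + Complex.I) ^ 3 =
      ((-(2 * (2 * T + 1) ^ 2 * Real.sqrt (T + 1) / (3 * T + 1) ^ ((3 : ℝ) / 2)) : ℝ) : ℂ) := by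
    rw [hreal, hs]
    push_cast
    rw [eq_div_iff (by push_cast at h3cne ⊢; exact h3cne : (3*(T:ℂ)+1) ≠ 0)]
    push_cast at ha2C
    linear_combination ((T:ℂ) * (a:ℂ) + (3*(T:ℂ)+1) * Complex.I) * ha2C +
      ((3*(T:ℂ)+1) * ((3*(T:ℂ)+2)*(a:ℂ) + ((T:ℂ)+1)*Complex.I)) * Complex.I_sq
  refine ⟨hmain, ?_, fun hT0 => ?_⟩
  · have : (0:ℝ) ≤ 2 * (2 * T + 1) ^ 2 * Real.sqrt (T + 1) / (3 * T + 1) ^ ((3 : ℝ) / 2) := by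
      positivity
    linarith
  · rw [hmain]
    norm_cast
    rw [Ffun]
    field_simp
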